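/- arXiv:1507.00411 — 4 statements merged into one kernel-verified Lean document; each statement's English description precedes it below -/
import Mathlib

section
/- For every pattern poset P and prime power q, the number of orbits of the co-adjoint action of U_P(q) on the dual space 𝒰_P(q)* equals the number of orbits of the adjoint action of U_P(q) on 𝒰_P(q), and both are equal to k(U_P(q)), the number of conjugacy classes of U_P(q). -/
/-
Common framework: pattern posets, pattern algebras and pattern groups
(in the sense of Isaacs), the spaces `L_P(q)` realizing the dual of the pattern
algebra, the co-adjoint action, poset systems `(P, m, A)` and their orbit counts
`k(P, m, A; q)`, and combinatorial operations on pattern posets, following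
"On Higman's conjecture" by Pak and Soffer.
-/

open Matrix

/-- A pattern poset on `{0,…,n-1}`: a strict partial order on `Fin n` that has the
standard order of the integers as a linear extension. -/
structure PatternPoset (n : ℕ) where
  lt : Fin n → Fin n → Prop
  lt_trans : ∀ {i j k : Fin n}, lt i j → lt j k → lt i k
  lt_le : ∀ {i j : Fin n}, lt i j → (i : ℕ) < (j : ℕ)

namespace PatternPoset

variable {n : ℕ}

theorem lt_irrefl (P : PatternPoset n) (i : Fin n) : ¬ P.lt i i :=
  fun h => Nat.lt_irrefl _ (P.lt_le h)

theorem ne_of_lt (P : PatternPoset n) {i j : Fin n} (h : P.lt i j) : i ≠ j := by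
  intro e; subst e; exact P.lt_irrefl i h

/-- The pattern algebra `𝒰_P(q)`, as a subspace of the `n × n` matrices:
matrices supported on the cells `(i,j)` with `i ≺ j`. -/
def patternAlg (P : PatternPoset n) (F : Type*) [Field F] :
    Submodule F (Matrix (Fin n) (Fin n) F) where
  carrier := {X | ∀ i j : Fin n, ¬ P.lt i j → X i j = 0}
  add_mem' := by
    intro a b ha hb i j h
    simp [Matrix.add_apply, ha i j h, hb i j h]
  zero_mem' := by intro i j h; simp
  smul_mem' := by
    intro c a ha i j h
    simp [Matrix.smul_apply, ha i j h]

theorem mul_mem_patternAlg {P : PatternPoset n} {F : Type*} [Field F]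
    {X Y : Matrix (Fin n) (Fin n) F} (hX : X ∈ P.patternAlg F) (hY : Y ∈ P.patternAlg F) :
    X * Y ∈ P.patternAlg F := by
  intro i j h
  rw [Matrix.mul_apply]
  apply Finset.sum_eq_zero
  intro k _
  by_cases h1 : P.lt i k
  · by_cases h2 : P.lt k j
    · exact absurd (P.lt_trans h1 h2) h
    · rw [hY k j h2, mul_zero]
  · rw [hX i k h1, zero_mul]

theorem pow_apply_ne_zero {P : PatternPoset n} {F : Type*} [Field F]
    {X : Matrix (Fin n) (Fin n) F} (hX : X ∈ P.patternAlg F) :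
    ∀ t (i j : Fin n), (X ^ t) i j ≠ 0 → (i : ℕ) + t ≤ (j : ℕ) := by
  intro t
  induction t with
  | zero =>
    intro i j h
    rw [pow_zero] at h
    by_cases hij : i = j
    · subst hij; simp
    · exact absurd (Matrix.one_apply_ne hij) h
  | succ t ih =>
    intro i j h
    rw [pow_succ, Matrix.mul_apply] at h
    obtain ⟨k, -, hk⟩ := Finset.exists_ne_zero_of_sum_ne_zero h
    have h1 : (X ^ t) i k ≠ 0 := fun e => hk (by rw [e, zero_mul])
    have h2 : X k j ≠ 0 := fun e => hk (by rw [e, mul_zero])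
    have h3 : P.lt k j := by by_contra hc; exact h2 (hX k j hc)
    have h4 := ih i k h1
    have h5 := P.lt_le h3
    omega

theorem pow_card_eq_zero {P : PatternPoset n} {F : Type*} [Field F]
    {X : Matrix (Fin n) (Fin n) F} (hX : X ∈ P.patternAlg F) : X ^ n = 0 := by
  ext i j
  simp only [Matrix.zero_apply]
  by_contra h
  have h1 := pow_apply_ne_zero hX n i j h
  have h2 := j.isLt
  omega

theorem pow_succ_mem_patternAlg {P : PatternPoset n} {F : Type*} [Field F]
    {X : Matrix (Fin n) (Fin n) F} (hX : X ∈ P.patternAlg F) (t : ℕ) :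
    X ^ (t + 1) ∈ P.patternAlg F := by
  induction t with
  | zero => simpa using hX
  | succ t ih => rw [pow_succ]; exact mul_mem_patternAlg ih hX

theorem inv_sub_one_mem {P : PatternPoset n} {F : Type*} [Field F]
    {a : (Matrix (Fin n) (Fin n) F)ˣ}
    (ha : ((a : Matrix (Fin n) (Fin n) F) - 1) ∈ P.patternAlg F) :
    (((a⁻¹ : (Matrix (Fin n) (Fin n) F)ˣ) : Matrix (Fin n) (Fin n) F) - 1)
      ∈ P.patternAlg F := by
  rcases Nat.eq_zero_or_pos n with hn | hn
  · subst hn; intro i j _; exact i.elim0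
  obtain ⟨m, rfl⟩ : ∃ m, n = m + 1 := ⟨n - 1, by omega⟩
  set X : Matrix (Fin (m + 1)) (Fin (m + 1)) F :=
    (a : Matrix (Fin (m + 1)) (Fin (m + 1)) F) - 1 with hXdef
  have hXmem : -X ∈ P.patternAlg F := (P.patternAlg F).neg_mem ha
  have hXn : (-X) ^ (m + 1) = 0 := pow_card_eq_zero hXmem
  have key : (∑ t ∈ Finset.range (m + 1), (-X) ^ t) *
      (a : Matrix (Fin (m + 1)) (Fin (m + 1)) F) = 1 := by
    have hgeom := geom_sum_mul (-X) (m + 1)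
    rw [hXn] at hgeom
    have ha' : (a : Matrix (Fin (m + 1)) (Fin (m + 1)) F) = -((-X) - 1) := by
      rw [hXdef]; abel
    rw [ha', mul_neg, hgeom]
    simp
  have hinv : ((a⁻¹ : (Matrix (Fin (m + 1)) (Fin (m + 1)) F)ˣ) :
        Matrix (Fin (m + 1)) (Fin (m + 1)) F)
      = ∑ t ∈ Finset.range (m + 1), (-X) ^ t :=
    Units.inv_eq_of_mul_eq_one_left key
  rw [hinv]
  have hsplit : (∑ t ∈ Finset.range (m + 1), (-X) ^ t) - 1
      = ∑ t ∈ Finset.range m, (-X) ^ (t + 1) := by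
    rw [Finset.sum_range_succ' (fun t => (-X) ^ t) m]
    simp
  rw [hsplit]
  exact Submodule.sum_mem _ (fun t _ => pow_succ_mem_patternAlg hXmem t)

theorem entry_cases {P : PatternPoset n} {F : Type*} [Field F]
    {M : Matrix (Fin n) (Fin n) F} (hM : (M - 1) ∈ P.patternAlg F)
    {i k : Fin n} (h : M i k ≠ 0) : i = k ∨ P.lt i k := by
  by_contra hc
  push_neg at hc
  apply h
  have h1 := hM i k hc.2
  have h2 : (1 : Matrix (Fin n) (Fin n) F) i k = 0 := Matrix.one_apply_ne hc.1
  calc M i k = (M - 1) i k + (1 : Matrix (Fin n) (Fin n) F) i k := by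
        simp [Matrix.sub_apply]
    _ = 0 := by rw [h1, h2, add_zero]

theorem conj_entry_zero {P : PatternPoset n} {F : Type*} [Field F]
    {A B Y : Matrix (Fin n) (Fin n) F}
    (hA : (A - 1) ∈ P.patternAlg F) (hB : (B - 1) ∈ P.patternAlg F)
    (i j : Fin n)
    (hzero : ∀ k l : Fin n, (i = k ∨ P.lt i k) → (l = j ∨ P.lt l j) → Y k l = 0) :
    (A * Y * B) i j = 0 := by
  rw [Matrix.mul_apply]
  apply Finset.sum_eq_zero
  intro l _
  rw [Matrix.mul_apply, Finset.sum_mul]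
  apply Finset.sum_eq_zero
  intro k _
  by_cases hAik : A i k = 0
  · rw [hAik, zero_mul, zero_mul]
  by_cases hBlj : B l j = 0
  · rw [hBlj, mul_zero]
  rw [hzero k l (entry_cases hA hAik) (entry_cases hB hBlj), mul_zero, zero_mul]

/-- The pattern group `U_P(q) = {1 + X : X ∈ 𝒰_P(q)}`, as a subgroup of the units of the
matrix ring. -/
def patternGroup (P : PatternPoset n) (F : Type*) [Field F] :
    Subgroup (Matrix (Fin n) (Fin n) F)ˣ where
  carrier := {g | ((g : Matrix (Fin n) (Fin n) F) - 1) ∈ P.patternAlg F}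
  one_mem' := by
    simp only [Set.mem_setOf_eq, Units.val_one, sub_self]
    exact (P.patternAlg F).zero_mem
  mul_mem' := by
    intro a b ha hb
    simp only [Set.mem_setOf_eq, Units.val_mul] at *
    have h : (a : Matrix (Fin n) (Fin n) F) * b - 1 =
        ((a : Matrix (Fin n) (Fin n) F) - 1) * ((b : Matrix (Fin n) (Fin n) F) - 1)
          + (((a : Matrix (Fin n) (Fin n) F) - 1) + ((b : Matrix (Fin n) (Fin n) F) - 1)) := by
      noncomm_ring
    rw [h]
    exact (P.patternAlg F).add_mem (mul_mem_patternAlg ha hb) ((P.patternAlg F).add_mem ha hb)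
  inv_mem' := fun ha => inv_sub_one_mem ha

/-- `k(P; q)`: the number of conjugacy classes of the pattern group `U_P(q)`. -/
noncomputable def kOf (P : PatternPoset n) (F : Type*) [Field F] : ℕ :=
  Nat.card (ConjClasses (P.patternGroup F))

/-- The chain poset `C_n`, whose pattern group is the full unitriangular group `U_n(q)`. -/
def chainPoset (n : ℕ) : PatternPoset n where
  lt i j := (i : ℕ) < (j : ℕ)
  lt_trans := fun h1 h2 => Nat.lt_trans h1 h2
  lt_le := fun h => h

/-- The induced subposet `P − m`, obtained by deleting the element `m`. -/
def delete (P : PatternPoset (n + 1)) (m : Fin (n + 1)) : PatternPoset n where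
  lt i j := P.lt (m.succAbove i) (m.succAbove j)
  lt_trans := fun h1 h2 => P.lt_trans h1 h2
  lt_le := fun {i j} h => by
    have h2 : m.succAbove i < m.succAbove j := by
      rw [Fin.lt_def]; exact P.lt_le h
    exact Fin.lt_def.mp (Fin.succAbove_lt_succAbove_iff.mp h2)

/-- The dual poset `P*`, relabeled by `i ↦ n + 1 − i` so that the standard order is
again a linear extension. -/
def dual (P : PatternPoset n) : PatternPoset n where
  lt i j := P.lt j.rev i.rev
  lt_trans := fun h1 h2 => P.lt_trans h2 h1
  lt_le := fun {i j} h => by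
    have h1 : j.rev < i.rev := by rw [Fin.lt_def]; exact P.lt_le h
    exact Fin.lt_def.mp (Fin.rev_lt_rev.mp h1)

/-- The disjoint union `P ⨿ Q` of two pattern posets. -/
def disjUnion {m n : ℕ} (P : PatternPoset m) (Q : PatternPoset n) :
    PatternPoset (m + n) where
  lt x y :=
    match finSumFinEquiv.symm x, finSumFinEquiv.symm y with
    | Sum.inl a, Sum.inl b => P.lt a b
    | Sum.inr a, Sum.inr b => Q.lt a b
    | _, _ => False
  lt_trans := by
    intro i j k hij hjk
    rcases hi : finSumFinEquiv.symm i with a | a <;>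
      rcases hj : finSumFinEquiv.symm j with b | b <;>
        rcases hk : finSumFinEquiv.symm k with c | c <;>
          simp only [hi, hj, hk] at hij hjk ⊢ <;>
            first
              | exact P.lt_trans hij hjk
              | exact Q.lt_trans hij hjk
  lt_le := by
    intro i j h
    rcases hi : finSumFinEquiv.symm i with a | a <;>
      rcases hj : finSumFinEquiv.symm j with b | b <;>
        simp only [hi, hj] at h
    · have hi' : i = Fin.castAdd _ a := by
        rw [← finSumFinEquiv_apply_left, ← hi, Equiv.apply_symm_apply]
      have hj' : j = Fin.castAdd _ b := by
        rw [← finSumFinEquiv_apply_left, ← hj, Equiv.apply_symm_apply]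
      rw [hi', hj']
      exact P.lt_le h
    · have hi' : i = Fin.natAdd _ a := by
        rw [← finSumFinEquiv_apply_right, ← hi, Equiv.apply_symm_apply]
      have hj' : j = Fin.natAdd _ b := by
        rw [← finSumFinEquiv_apply_right, ← hj, Equiv.apply_symm_apply]
      rw [hi', hj']
      simpa using Q.lt_le h

/-- The subspace of matrices quotiented away in `L_P(q)`:
those vanishing on all cells `(i,j)` with `j ≺ i`. -/
def lowQuot (P : PatternPoset n) (F : Type*) [Field F] :
    Submodule F (Matrix (Fin n) (Fin n) F) where
  carrier := {X | ∀ i j : Fin n, P.lt j i → X i j = 0}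
  add_mem' := by
    intro a b ha hb i j h
    simp [Matrix.add_apply, ha i j h, hb i j h]
  zero_mem' := by intro i j h; simp
  smul_mem' := by
    intro c a ha i j h
    simp [Matrix.smul_apply, ha i j h]

/-- The space `L_P(q)`, realizing the dual `𝒰_P(q)*` as a quotient of the
space of all `n × n` matrices. -/
abbrev LSpace (P : PatternPoset n) (F : Type*) [Field F] :=
  Matrix (Fin n) (Fin n) F ⧸ P.lowQuot F

end PatternPoset

/-- Conjugation `X ↦ g X g⁻¹` by a unit, as a linear map on matrices. -/
def conjLin {n : ℕ} (F : Type*) [Field F] (g : (Matrix (Fin n) (Fin n) F)ˣ) :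
    Matrix (Fin n) (Fin n) F →ₗ[F] Matrix (Fin n) (Fin n) F where
  toFun X := (g : Matrix (Fin n) (Fin n) F) * X *
    ((g⁻¹ : (Matrix (Fin n) (Fin n) F)ˣ) : Matrix (Fin n) (Fin n) F)
  map_add' X Y := by (try dsimp only); rw [mul_add, add_mul]
  map_smul' c X := by (try dsimp only); rw [mul_smul_comm, smul_mul_assoc]; rfl

namespace PatternPoset

variable {n : ℕ}

/-- The co-adjoint action `K_g(X) = g X g⁻¹` of the pattern group on `L_P(q)`. -/
noncomputable def coadj (P : PatternPoset n) (F : Type*) [Field F]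
    (g : P.patternGroup F) : P.LSpace F →ₗ[F] P.LSpace F :=
  Submodule.mapQ _ _ (conjLin F (g : (Matrix (Fin n) (Fin n) F)ˣ)) (by
    intro Y hY
    simp only [Submodule.mem_comap]
    have hg : ((g : (Matrix (Fin n) (Fin n) F)ˣ) : Matrix (Fin n) (Fin n) F) - 1
        ∈ P.patternAlg F := g.2
    have hginv : (((g : (Matrix (Fin n) (Fin n) F)ˣ)⁻¹ : (Matrix (Fin n) (Fin n) F)ˣ) :
        Matrix (Fin n) (Fin n) F) - 1 ∈ P.patternAlg F := inv_sub_one_mem g.2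
    intro i j hji
    apply conj_entry_zero hg hginv
    intro k l hik hlj
    apply hY k l
    rcases hik with rfl | hik <;> rcases hlj with rfl | hlj
    · exact hji
    · exact P.lt_trans hlj hji
    · exact P.lt_trans hji hik
    · exact P.lt_trans (P.lt_trans hlj hji) hik)

/-- The poset `P^(m)`: the poset on the same ground set whose only relations
are `x ≺ m` for `x ≺_P m`. -/
def restrictTo (P : PatternPoset n) (m : Fin n) : PatternPoset n where
  lt x y := y = m ∧ P.lt x y
  lt_trans := fun h1 h2 => ⟨h2.1, P.lt_trans h1.2 h2.2⟩
  lt_le := fun h => P.lt_le h.2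

/-- The canonical projection `π : L_P(q) → L_{P^(m)}(q)`. -/
noncomputable def projL (P : PatternPoset n) (m : Fin n) (F : Type*) [Field F] :
    P.LSpace F →ₗ[F] (P.restrictTo m).LSpace F :=
  Submodule.mapQ _ _ LinearMap.id (by
    intro X hX
    simp only [Submodule.mem_comap, LinearMap.id_coe, id_eq]
    intro i j h
    exact hX i j h.2)

end PatternPoset

/-- The elementary transvection `E_{i,j}(α) = 1 + α e_{i,j}` as a unit of the matrix ring. -/
def transvectionUnit {n : ℕ} {F : Type*} [Field F] (i j : Fin n) (hij : i ≠ j) (α : F) :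
    (Matrix (Fin n) (Fin n) F)ˣ where
  val := 1 + Matrix.single i j α
  inv := 1 + Matrix.single i j (-α)
  val_inv := by
    have h0 : Matrix.single i j α * Matrix.single i j (-α) = 0 :=
      Matrix.single_mul_single_of_ne (h := hij.symm) ..
    have h1 : Matrix.single i j α + Matrix.single i j (-α) = 0 := by
      rw [← Matrix.single_add]; simp
    rw [add_mul, mul_add, mul_add, one_mul, mul_one, h0]
    rw [add_zero, add_assoc, one_mul, add_comm (Matrix.single i j (-α)), h1, add_zero]
  inv_val := by
    have h0 : Matrix.single i j (-α) * Matrix.single i j α = 0 :=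
      Matrix.single_mul_single_of_ne (h := hij.symm) ..
    have h1 : Matrix.single i j (-α) + Matrix.single i j α = 0 := by
      rw [← Matrix.single_add]; simp
    rw [add_mul, mul_add, mul_add, one_mul, mul_one, h0]
    rw [add_zero, add_assoc, one_mul, add_comm (Matrix.single i j α), h1, add_zero]

/-- A poset system `(P, m, A)`: a pattern poset `P`, a maximal element `m`,
and an anti-chain `A ⊆ lb(m)`. -/
structure PosetSystem (n : ℕ) where
  P : PatternPoset n
  m : Fin n
  m_max : ∀ x, ¬ P.lt m x
  A : Finset (Fin n)
  A_lb : ∀ a ∈ A, P.lt a m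
  A_anti : ∀ a ∈ A, ∀ b ∈ A, ¬ P.lt a b

namespace PosetSystem

variable {n : ℕ}

/-- The element `1_A = Σ_{a ∈ A} e_{m,a}` of `L_{P^(m)}(q)`. -/
noncomputable def oneA (S : PosetSystem n) (F : Type*) [Field F] :
    (S.P.restrictTo S.m).LSpace F :=
  Submodule.Quotient.mk (∑ a ∈ S.A, Matrix.single S.m a (1 : F))

/-- The action of `U_P(q)` on `L_{P^(m)}(q)` induced by the co-adjoint action. -/
noncomputable def coadjQ (S : PosetSystem n) (F : Type*) [Field F]
    (g : S.P.patternGroup F) :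
    (S.P.restrictTo S.m).LSpace F →ₗ[F] (S.P.restrictTo S.m).LSpace F :=
  Submodule.mapQ _ _ (conjLin F (g : (Matrix (Fin n) (Fin n) F)ˣ)) (by
    intro Y hY
    simp only [Submodule.mem_comap]
    have hg : ((g : (Matrix (Fin n) (Fin n) F)ˣ) : Matrix (Fin n) (Fin n) F) - 1
        ∈ S.P.patternAlg F := g.2
    have hginv : (((g : (Matrix (Fin n) (Fin n) F)ˣ)⁻¹ : (Matrix (Fin n) (Fin n) F)ˣ) :
        Matrix (Fin n) (Fin n) F) - 1 ∈ S.P.patternAlg F :=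
      PatternPoset.inv_sub_one_mem g.2
    intro i j hji
    obtain ⟨him, hjilt⟩ := hji
    apply PatternPoset.conj_entry_zero hg hginv
    intro k l hik hlj
    have hk : k = S.m := by
      rcases hik with rfl | hik
      · exact him
      · rw [him] at hik; exact absurd hik (S.m_max k)
    have hlm : S.P.lt l S.m := by
      rcases hlj with rfl | hlj
      · rw [← him]; exact hjilt
      · rw [him] at hjilt; exact S.P.lt_trans hlj hjilt
    subst hk
    exact hY S.m l ⟨rfl, hlm⟩)

/-- The stabilizer of `1_A` in `U_P(q)` for the induced action on `L_{P^(m)}(q)`. -/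
noncomputable def stab (S : PosetSystem n) (F : Type*) [Field F] :
    Set (S.P.patternGroup F) :=
  {g | S.coadjQ F g (S.oneA F) = S.oneA F}

/-- The fiber `π⁻¹(1_A) ⊆ L_P(q)`. -/
noncomputable def fiber (S : PosetSystem n) (F : Type*) [Field F] :
    Set (S.P.LSpace F) :=
  {X | S.P.projL S.m F X = S.oneA F}

/-- `k(P, m, A; q)`: the number of orbits of `Stab_{U_P(q)}(1_A)` acting on the fiber
`π⁻¹(1_A)` under the co-adjoint action, counted as the number of distinct orbit sets. -/
noncomputable def systemK (S : PosetSystem n) (F : Type*) [Field F] : ℕ :=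
  Nat.card {O : Set (S.P.LSpace F) // ∃ X ∈ S.fiber F,
    O = {Y | ∃ g ∈ S.stab F, S.P.coadj F g X = Y}}

/-- The poset `D(S)`: delete from `P` every relation `(a, x)` with `a ∈ A`,
`a ≺ x ≺ m`, and `A ∩ lb(x) = {a}`. -/
def D (S : PosetSystem n) : PatternPoset n where
  lt x y := S.P.lt x y ∧
    ¬ (x ∈ S.A ∧ S.P.lt y S.m ∧ ∀ b ∈ S.A, S.P.lt b y → b = x)
  lt_trans := by
    rintro i j k ⟨hij, hi⟩ ⟨hjk, -⟩
    refine ⟨S.P.lt_trans hij hjk, ?_⟩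
    rintro ⟨hiA, hkm, huniq⟩
    exact hi ⟨hiA, S.P.lt_trans hjk hkm, fun b hb hbj => huniq b hb (S.P.lt_trans hbj hjk)⟩
  lt_le := fun h => S.P.lt_le h.1

/-- `D(S)` together with the same `m` and `A`, as a poset system. -/
def DSys (S : PosetSystem n) : PosetSystem n where
  P := S.D
  m := S.m
  m_max := fun x h => S.m_max x h.1
  A := S.A
  A_lb := fun a ha => ⟨S.A_lb a ha, fun h => S.P.lt_irrefl S.m h.2.1⟩
  A_anti := fun a ha b hb h => S.A_anti a ha b hb h.1

end PosetSystem

/-- The adjoint action `Ad_g(X) = g X g⁻¹` of the pattern group on the pattern algebra. -/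
noncomputable def adLin (n : ℕ) (P : PatternPoset n) (F : Type) [Field F]
    (g : P.patternGroup F) : P.patternAlg F →ₗ[F] P.patternAlg F :=
  LinearMap.restrict (conjLin F (g : (Matrix (Fin n) (Fin n) F)ˣ))
    (p := P.patternAlg F) (q := P.patternAlg F) (by
      intro Y hY
      have hg : ((g : (Matrix (Fin n) (Fin n) F)ˣ) : Matrix (Fin n) (Fin n) F) - 1
          ∈ P.patternAlg F := g.2
      have hginv := PatternPoset.inv_sub_one_mem (P := P) g.2
      intro i j hij
      apply PatternPoset.conj_entry_zero hg hginv
      intro k l hik hlj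
      by_cases hkl : P.lt k l
      · exfalso
        apply hij
        rcases hik with rfl | hik <;> rcases hlj with rfl | hlj
        · exact hkl
        · exact P.lt_trans hkl hlj
        · exact P.lt_trans hik hkl
        · exact P.lt_trans (P.lt_trans hik hkl) hlj
      · exact hY k l hkl)

/-- The number of orbits of the adjoint action of `U_P(q)` on `𝒰_P(q)`. -/
noncomputable def adjOrbitCount (n : ℕ) (P : PatternPoset n) (F : Type) [Field F] : ℕ :=
  Nat.card {O : Set (P.patternAlg F) //
    ∃ X, O = {Y | ∃ g : P.patternGroup F, adLin n P F g X = Y}}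

/-- The number of orbits of the co-adjoint action `K_g(f) = f ∘ Ad_{g⁻¹}` of `U_P(q)` on
the dual space `𝒰_P(q)*`. -/
noncomputable def coadjOrbitCount (n : ℕ) (P : PatternPoset n) (F : Type) [Field F] : ℕ :=
  Nat.card {O : Set (Module.Dual F (P.patternAlg F)) //
    ∃ f, O = {h | ∃ g : P.patternGroup F, f ∘ₗ adLin n P F g⁻¹ = h}}


section Lemma32Aux

open MulAction Module

variable {n : ℕ} {P : PatternPoset n} {F : Type} [Field F]

lemma adLin_val (g : P.patternGroup F) (X : P.patternAlg F) :
    (adLin n P F g X : Matrix (Fin n) (Fin n) F) =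
      ((g : (Matrix (Fin n) (Fin n) F)ˣ) : Matrix (Fin n) (Fin n) F) * X *
        (((g : (Matrix (Fin n) (Fin n) F)ˣ)⁻¹ : (Matrix (Fin n) (Fin n) F)ˣ) :
          Matrix (Fin n) (Fin n) F) := rfl

lemma adLin_one : adLin n P F 1 = LinearMap.id := by
  apply LinearMap.ext; intro X
  apply Subtype.ext
  rw [adLin_val]
  simp

lemma adLin_mul (a b : P.patternGroup F) :
    adLin n P F (a * b) = (adLin n P F a) ∘ₗ (adLin n P F b) := by
  apply LinearMap.ext; intro X
  apply Subtype.ext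
  rw [LinearMap.comp_apply, adLin_val, adLin_val, adLin_val]
  simp [mul_assoc]

lemma adLin_inv_cancel (g : P.patternGroup F) (X : P.patternAlg F) :
    adLin n P F g⁻¹ (adLin n P F g X) = X := by
  rw [← LinearMap.comp_apply, ← adLin_mul, inv_mul_cancel, adLin_one, LinearMap.id_apply]

lemma adLin_cancel_inv (g : P.patternGroup F) (X : P.patternAlg F) :
    adLin n P F g (adLin n P F g⁻¹ X) = X := by
  rw [← LinearMap.comp_apply, ← adLin_mul, mul_inv_cancel, adLin_one, LinearMap.id_apply]

/-- The adjoint action as a `MulAction` on the pattern algebra. -/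
noncomputable instance instAdAction : MulAction (P.patternGroup F) (P.patternAlg F) where
  smul g X := adLin n P F g X
  one_smul X := by show adLin n P F 1 X = X; rw [adLin_one]; rfl
  mul_smul a b X := by
    show adLin n P F (a * b) X = adLin n P F a (adLin n P F b X)
    rw [adLin_mul]; rfl

/-- The co-adjoint action as a `MulAction` on the dual space. -/
noncomputable instance instCoadAction :
    MulAction (P.patternGroup F) (Module.Dual F (P.patternAlg F)) where
  smul g f := f ∘ₗ adLin n P F g⁻¹
  one_smul f := by
    show f ∘ₗ adLin n P F (1 : P.patternGroup F)⁻¹ = f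
    rw [inv_one, adLin_one, LinearMap.comp_id]
  mul_smul a b f := by
    show f ∘ₗ adLin n P F (a * b)⁻¹ = (f ∘ₗ adLin n P F b⁻¹) ∘ₗ adLin n P F a⁻¹
    rw [_root_.mul_inv_rev, adLin_mul, LinearMap.comp_assoc]

/-- Counting orbits as orbit-sets equals counting the orbit quotient. -/
lemma card_orbitSets_eq_card_quotient (G X : Type*) [Group G] [MulAction G X] :
    Nat.card {O : Set X // ∃ x, O = MulAction.orbit G x} =
      Nat.card (Quotient (MulAction.orbitRel G X)) := by
  symm
  apply Nat.card_eq_of_bijective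
    (Quotient.lift (fun x => (⟨MulAction.orbit G x, x, rfl⟩ :
      {O : Set X // ∃ x, O = MulAction.orbit G x}))
      (fun a b h => Subtype.ext ((MulAction.orbit_eq_iff).mpr h)))
  constructor
  · intro a b
    induction a using Quotient.ind
    induction b using Quotient.ind
    intro h
    apply Quotient.sound
    have := congrArg Subtype.val h
    exact (MulAction.orbit_eq_iff).mp this
  · rintro ⟨O, x, rfl⟩
    exact ⟨Quotient.mk _ x, rfl⟩

variable (P F) in
/-- Every element of the pattern algebra gives a unit `1 + X` in the pattern group. -/
lemma isUnit_one_add_patternAlg (X : P.patternAlg F) :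
    IsUnit (1 + (X : Matrix (Fin n) (Fin n) F)) := by
  rcases Nat.eq_zero_or_pos n with h | h
  · have : IsEmpty (Fin n) := by rw [h]; infer_instance
    exact isUnit_of_subsingleton _
  · exact IsNilpotent.isUnit_one_add ⟨n, PatternPoset.pow_card_eq_zero X.2⟩

variable (P F) in
noncomputable def toGroup (X : P.patternAlg F) : P.patternGroup F :=
  ⟨(isUnit_one_add_patternAlg P F X).unit, by
    show ((isUnit_one_add_patternAlg P F X).unit : Matrix (Fin n) (Fin n) F) - 1
      ∈ P.patternAlg F
    rw [IsUnit.unit_spec]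
    have h1 : (1 : Matrix (Fin n) (Fin n) F) + ↑X - 1 = ↑X := add_sub_cancel_left 1 _
    rw [h1]; exact X.2⟩

variable (P F) in
/-- The bijection `g ↦ g - 1` from the pattern group to the pattern algebra. -/
def toAlg (g : P.patternGroup F) : P.patternAlg F :=
  ⟨((g : (Matrix (Fin n) (Fin n) F)ˣ) : Matrix (Fin n) (Fin n) F) - 1, g.2⟩

lemma toAlg_toGroup (X : P.patternAlg F) : toAlg P F (toGroup P F X) = X := by
  apply Subtype.ext
  show ((isUnit_one_add_patternAlg P F X).unit : Matrix (Fin n) (Fin n) F) - 1 = X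
  rw [IsUnit.unit_spec, add_sub_cancel_left]

lemma adLin_toAlg (c g : P.patternGroup F) :
    adLin n P F c (toAlg P F g) = toAlg P F (c * g * c⁻¹) := by
  apply Subtype.ext
  rw [adLin_val]
  show ((c : (Matrix (Fin n) (Fin n) F)ˣ) : Matrix (Fin n) (Fin n) F) *
      (((g : (Matrix (Fin n) (Fin n) F)ˣ) : Matrix (Fin n) (Fin n) F) - 1) *
      (((c : (Matrix (Fin n) (Fin n) F)ˣ)⁻¹ : (Matrix (Fin n) (Fin n) F)ˣ) :
        Matrix (Fin n) (Fin n) F) =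
    (((c * g * c⁻¹ : P.patternGroup F) : (Matrix (Fin n) (Fin n) F)ˣ) :
        Matrix (Fin n) (Fin n) F) - 1
  have hcc : ((c : (Matrix (Fin n) (Fin n) F)ˣ) : Matrix (Fin n) (Fin n) F) *
      (((c : (Matrix (Fin n) (Fin n) F)ˣ)⁻¹ : (Matrix (Fin n) (Fin n) F)ˣ) :
        Matrix (Fin n) (Fin n) F) = 1 := by
    rw [← Units.val_mul, mul_inv_cancel, Units.val_one]
  rw [mul_sub, sub_mul, mul_one, hcc]
  congr 1

variable (n P F) in
/-- Adjoint orbits are in bijection with conjugacy classes. -/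
lemma card_adjQuotient_eq_card_conjClasses :
    Nat.card (Quotient (MulAction.orbitRel (P.patternGroup F) (P.patternAlg F))) =
      Nat.card (ConjClasses (P.patternGroup F)) := by
  symm
  apply Nat.card_eq_of_bijective (Quotient.lift
    (fun g => (Quotient.mk _ (toAlg P F g) :
      Quotient (MulAction.orbitRel (P.patternGroup F) (P.patternAlg F))))
    ?_)
  · constructor
    · intro a b
      induction a using Quotient.ind
      induction b using Quotient.ind
      rename_i a b
      intro h
      apply Quotient.sound
      obtain ⟨c, hc⟩ := Quotient.exact h
      have hc' : adLin n P F c (toAlg P F b) = toAlg P F a := hc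
      rw [adLin_toAlg] at hc'
      have : c * b * c⁻¹ = a := by
        have h2 := congrArg Subtype.val hc'
        have h2' : (((c * b * c⁻¹ : P.patternGroup F) : (Matrix (Fin n) (Fin n) F)ˣ) :
            Matrix (Fin n) (Fin n) F) - 1 =
            ((a : (Matrix (Fin n) (Fin n) F)ˣ) : Matrix (Fin n) (Fin n) F) - 1 := h2
        have h3 : (((c * b * c⁻¹ : P.patternGroup F) : (Matrix (Fin n) (Fin n) F)ˣ) :
            Matrix (Fin n) (Fin n) F) =
            ((a : (Matrix (Fin n) (Fin n) F)ˣ) : Matrix (Fin n) (Fin n) F) :=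
          sub_left_inj.mp h2' 
        exact Subtype.ext (Units.ext h3)
      exact (isConj_iff.mpr ⟨c, this⟩).symm
    · intro y
      induction y using Quotient.ind
      rename_i X
      exact ⟨Quotient.mk _ (toGroup P F X), congrArg (Quotient.mk _) (toAlg_toGroup X)⟩
  · intro a b hab
    obtain ⟨c, hc⟩ := isConj_iff.mp hab
    apply Quotient.sound
    refine ⟨c⁻¹, ?_⟩
    have hb : c⁻¹ * b * c⁻¹⁻¹ = a := by rw [← hc]; group
    show adLin n P F c⁻¹ (toAlg P F b) = toAlg P F a
    rw [adLin_toAlg, hb]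

/-- For a linear endomorphism of a finite vector space, the number of fixed dual vectors
equals the number of fixed vectors. -/
lemma card_fixed_dual_eq {V : Type} [AddCommGroup V] [Module F V]
    [Fintype F] [Finite V] [FiniteDimensional F V] (L : V →ₗ[F] V) :
    Nat.card {f : Module.Dual F V | f ∘ₗ L = f} = Nat.card {X : V | L X = X} := by
  classical
  set W : Submodule F V := LinearMap.range (L - LinearMap.id)
  have hker : {X : V | L X = X} = (LinearMap.ker (L - LinearMap.id) : Set V) := by
    ext X
    simp only [Set.mem_setOf_eq, SetLike.mem_coe, LinearMap.mem_ker, LinearMap.sub_apply,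
      LinearMap.id_apply, sub_eq_zero]
  have hann : {f : Module.Dual F V | f ∘ₗ L = f} = (W.dualAnnihilator : Set (Module.Dual F V)) := by
    ext f
    simp only [Set.mem_setOf_eq, SetLike.mem_coe, Submodule.mem_dualAnnihilator]
    constructor
    · rintro hf w ⟨x, rfl⟩
      have := congrArg (fun φ => φ x) hf
      simp only [LinearMap.comp_apply] at this
      simp only [LinearMap.sub_apply, LinearMap.id_apply, map_sub, this, sub_self]
    · intro hf
      apply LinearMap.ext; intro x
      have := hf _ ⟨x, rfl⟩
      simp only [LinearMap.sub_apply, LinearMap.id_apply, map_sub, sub_eq_zero] at this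
      simpa using this
  rw [hker, hann]
  show Nat.card W.dualAnnihilator = Nat.card (LinearMap.ker (L - LinearMap.id))
  have e1 : Nat.card W.dualAnnihilator = Nat.card (Module.Dual F (V ⧸ W)) :=
    Nat.card_congr W.dualQuotEquivDualAnnihilator.symm.toEquiv
  rw [e1]
  haveI : Finite (V ⧸ W) := Quotient.finite _
  haveI : Finite (Module.Dual F (V ⧸ W)) := Finite.of_injective _ DFunLike.coe_injective
  letI : Fintype (Module.Dual F (V ⧸ W)) := Fintype.ofFinite _
  letI : Fintype (LinearMap.ker (L - LinearMap.id)) := Fintype.ofFinite _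
  have c1 : Fintype.card (Module.Dual F (V ⧸ W)) =
      Fintype.card F ^ Module.finrank F (Module.Dual F (V ⧸ W)) := card_eq_pow_finrank (K := F)
  have c2 : Fintype.card (LinearMap.ker (L - LinearMap.id)) =
      Fintype.card F ^ Module.finrank F (LinearMap.ker (L - LinearMap.id)) :=
    card_eq_pow_finrank (K := F)
  rw [Nat.card_eq_fintype_card, Nat.card_eq_fintype_card, c1, c2]
  congr 1
  rw [Subspace.dual_finrank_eq]
  have h1 := Submodule.finrank_quotient_add_finrank W
  have h2 := LinearMap.finrank_range_add_finrank_ker (L - LinearMap.id)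
  have hW : LinearMap.range (L - LinearMap.id) = W := rfl
  rw [hW] at h2
  omega

variable (n P F) in
lemma card_coadjQuotient_eq [Fintype F] :
    Nat.card (Quotient (MulAction.orbitRel (P.patternGroup F)
        (Module.Dual F (P.patternAlg F)))) =
      Nat.card (Quotient (MulAction.orbitRel (P.patternGroup F) (P.patternAlg F))) := by
  classical
  letI : Fintype (P.patternGroup F) := Fintype.ofFinite _
  letI : Fintype (P.patternAlg F) := Fintype.ofFinite _
  haveI hfd : Finite (Module.Dual F (P.patternAlg F)) := Finite.of_injective _ DFunLike.coe_injective
  letI : Fintype (Module.Dual F (P.patternAlg F)) := Fintype.ofFinite _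
  letI : Fintype (Quotient (MulAction.orbitRel (P.patternGroup F) (P.patternAlg F))) :=
    Fintype.ofFinite _
  letI : Fintype (Quotient (MulAction.orbitRel (P.patternGroup F)
    (Module.Dual F (P.patternAlg F)))) := Fintype.ofFinite _
  letI : ∀ g : P.patternGroup F, Fintype (MulAction.fixedBy (P.patternAlg F) g) :=
    fun g => Fintype.ofFinite _
  letI : ∀ g : P.patternGroup F,
      Fintype (MulAction.fixedBy (Module.Dual F (P.patternAlg F)) g) :=
    fun g => Fintype.ofFinite _
  have hb1 := MulAction.sum_card_fixedBy_eq_card_orbits_mul_card_group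
    (P.patternGroup F) (P.patternAlg F)
  have hb2 := MulAction.sum_card_fixedBy_eq_card_orbits_mul_card_group
    (P.patternGroup F) (Module.Dual F (P.patternAlg F))
  have hsummand : ∀ g : P.patternGroup F,
      Fintype.card (MulAction.fixedBy (Module.Dual F (P.patternAlg F)) g) =
        Fintype.card (MulAction.fixedBy (P.patternAlg F) g) := by
    intro g
    rw [← Nat.card_eq_fintype_card, ← Nat.card_eq_fintype_card]
    have hfix1 : MulAction.fixedBy (P.patternAlg F) g =
        {X : P.patternAlg F | adLin n P F g⁻¹ X = X} := by
      ext X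
      show adLin n P F g X = X ↔ adLin n P F g⁻¹ X = X
      constructor
      · intro h; conv_lhs => rw [← h]
        exact adLin_inv_cancel g X
      · intro h; conv_lhs => rw [← h]
        exact adLin_cancel_inv g X
    have hfix2 : MulAction.fixedBy (Module.Dual F (P.patternAlg F)) g =
        {f : Module.Dual F (P.patternAlg F) | f ∘ₗ adLin n P F g⁻¹ = f} := rfl
    rw [hfix1, hfix2]
    exact card_fixed_dual_eq (adLin n P F g⁻¹)
  have hsum : (∑ g : P.patternGroup F,
      Fintype.card (MulAction.fixedBy (Module.Dual F (P.patternAlg F)) g)) =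
      ∑ g : P.patternGroup F, Fintype.card (MulAction.fixedBy (P.patternAlg F) g) :=
    Finset.sum_congr rfl (fun g _ => hsummand g)
  rw [hsum, hb1] at hb2
  have hGpos : 0 < Fintype.card (P.patternGroup F) := Fintype.card_pos
  rw [Nat.card_eq_fintype_card, Nat.card_eq_fintype_card]
  exact Nat.eq_of_mul_eq_mul_right hGpos hb2.symm

end Lemma32Aux

/-- **Lemma 3.2**: the number of co-adjoint orbits equals the number of adjoint orbits,
and both equal the number of conjugacy classes `k(U_P(q))`. -/
theorem coadjoint_eq_adjoint_eq_classes (n : ℕ) (P : PatternPoset n)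
    (F : Type) [Field F] [Fintype F] (hq : IsPrimePow (Fintype.card F)) :
    coadjOrbitCount n P F = adjOrbitCount n P F ∧
    adjOrbitCount n P F = Nat.card (ConjClasses (P.patternGroup F)) := by
  have hadj : adjOrbitCount n P F =
      Nat.card (Quotient (MulAction.orbitRel (P.patternGroup F) (P.patternAlg F))) := by
    have : adjOrbitCount n P F =
        Nat.card {O : Set (P.patternAlg F) //
          ∃ X, O = MulAction.orbit (P.patternGroup F) X} := rfl
    rw [this, card_orbitSets_eq_card_quotient]
  have hcoadj : coadjOrbitCount n P F =
      Nat.card (Quotient (MulAction.orbitRel (P.patternGroup F)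
        (Module.Dual F (P.patternAlg F)))) := by
    have : coadjOrbitCount n P F =
        Nat.card {O : Set (Module.Dual F (P.patternAlg F)) //
          ∃ f, O = MulAction.orbit (P.patternGroup F) f} := rfl
    rw [this, card_orbitSets_eq_card_quotient]
  refine ⟨?_, ?_⟩
  · rw [hadj, hcoadj, card_coadjQuotient_eq n P F]
  · rw [hadj, card_adjQuotient_eq_card_conjClasses n P F]
end

section
/- Let P, Q, and R be finite posets and suppose P strongly embeds into Q in k steps (P ↪_k Q). Then P + R strongly embeds into Q + R + C_k in 2k steps: (P + R) ↪_{2k} (Q + R + C_k), where + denotes lexicographic sum and C_k is the k-element chain. -/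
/-- A finite poset: a bundled finite type with a partial order. -/
structure FinPoset : Type 1 where
  carrier : Type
  [fintype : Fintype carrier]
  [str : PartialOrder carrier]

attribute [instance] FinPoset.fintype FinPoset.str

namespace FinPoset

/-- The `n`-element chain `C_n`. -/
def chain (n : ℕ) : FinPoset := { carrier := Fin n }

/-- The lexicographic sum `P + Q`: place `Q` above `P`. -/
def lexSum (P Q : FinPoset) : FinPoset where
  carrier := P.carrier ⊕ₗ Q.carrier
  fintype := inferInstanceAs (Fintype (P.carrier ⊕ Q.carrier))

/-- The disjoint union `P ⨿ Q`. -/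
def disjUnion (P Q : FinPoset) : FinPoset where
  carrier := P.carrier ⊕ Q.carrier

/-- The induced subposet `P − m` on the complement of `{m}`. -/
noncomputable def erase (P : FinPoset) (m : P.carrier) : FinPoset where
  carrier := {x : P.carrier // x ≠ m}
  fintype := @Subtype.fintype _ _ (fun _ => Classical.propDecidable _) _

/-- The relation of the poset `D(S)` for the poset system `S = (P, m, {a})`:
delete from `P` the relations `(a, x)` with `a ≺ x ≺ m`. -/
def DRel (P : FinPoset) (m a : P.carrier) (x y : P.carrier) : Prop :=
  x < y ∧ ¬ (x = a ∧ y < m)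

end FinPoset

/-- One step of a strong embedding sequence: there is a poset system
`S = (Q, m, {a})` with `P ≅ D(S) − m`. -/
def StepEmbed (P Q : FinPoset) : Prop :=
  ∃ (m a : Q.carrier), (∀ x, ¬ m < x) ∧ a < m ∧
    Nonempty (RelIso (fun x y : P.carrier => x < y)
      (fun x y : {z : Q.carrier // z ≠ m} => Q.DRel m a x.1 y.1))

/-- `P` strongly embeds into `Q` in `n` steps, written `P ↪_n Q`:
there are poset systems `S_1, …, S_n` with `S_i = (P_i, m_i, {a_i})`, `P_0 = P`,
`P_n = Q`, and `P_i ≅ D(S_{i+1}) − m_{i+1}` for `0 ≤ i < n`. -/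
def StrongEmbedN : ℕ → FinPoset → FinPoset → Prop
  | 0, P, Q => Nonempty (P.carrier ≃o Q.carrier)
  | n + 1, P, Q => ∃ R : FinPoset, StrongEmbedN n P R ∧ StepEmbed R Q

/-- `P` strongly embeds into `Q`. -/
def StrongEmbed (P Q : FinPoset) : Prop := ∃ n, StrongEmbedN n P Q


namespace Lemma54

/-! ### Helper lemmas about the order on `lexSum` and `chain`. -/

section LexFacts

variable {P Q : FinPoset}

lemma Lll {a b : P.carrier} :
    @LT.lt (P.lexSum Q).carrier _ (Sum.inl a) (Sum.inl b) ↔ a < b := Sum.Lex.inl_lt_inl_iff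

lemma Lrr {a b : Q.carrier} :
    @LT.lt (P.lexSum Q).carrier _ (Sum.inr a) (Sum.inr b) ↔ a < b := Sum.Lex.inr_lt_inr_iff

lemma Llr {a : P.carrier} {b : Q.carrier} :
    @LT.lt (P.lexSum Q).carrier _ (Sum.inl a) (Sum.inr b) := Sum.Lex.inl_lt_inr a b

lemma Lnrl {a : P.carrier} {b : Q.carrier} :
    ¬ @LT.lt (P.lexSum Q).carrier _ (Sum.inr b) (Sum.inl a) := Sum.Lex.not_inr_lt_inl

lemma LEll {a b : P.carrier} :
    @LE.le (P.lexSum Q).carrier _ (Sum.inl a) (Sum.inl b) ↔ a ≤ b := Sum.Lex.inl_le_inl_iff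

lemma LErr {a b : Q.carrier} :
    @LE.le (P.lexSum Q).carrier _ (Sum.inr a) (Sum.inr b) ↔ a ≤ b := Sum.Lex.inr_le_inr_iff

lemma LElr {a : P.carrier} {b : Q.carrier} :
    @LE.le (P.lexSum Q).carrier _ (Sum.inl a) (Sum.inr b) := Sum.Lex.inl_le_inr a b

lemma LEnrl {a : P.carrier} {b : Q.carrier} :
    ¬ @LE.le (P.lexSum Q).carrier _ (Sum.inr b) (Sum.inl a) := Sum.Lex.not_inr_le_inl

end LexFacts

/-! ### The intermediate poset `X` -/

variable (Q R : FinPoset) (k : ℕ) (m : Q.carrier)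

def mle : ((Q.carrier ⊕ R.carrier) ⊕ Fin k) → ((Q.carrier ⊕ R.carrier) ⊕ Fin k) → Prop
  | .inl (.inl q1), .inl (.inl q2) => q1 ≤ q2
  | .inl (.inl q), .inl (.inr _) => q ≠ m
  | .inl (.inl q), .inr _ => q ≠ m
  | .inl (.inr _), .inl (.inl _) => False
  | .inl (.inr r1), .inl (.inr r2) => r1 ≤ r2
  | .inl (.inr _), .inr _ => True
  | .inr _, .inl _ => False
  | .inr i, .inr j => i ≤ j

def mlt : ((Q.carrier ⊕ R.carrier) ⊕ Fin k) → ((Q.carrier ⊕ R.carrier) ⊕ Fin k) → Prop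
  | .inl (.inl q1), .inl (.inl q2) => q1 < q2
  | .inl (.inl q), .inl (.inr _) => q ≠ m
  | .inl (.inl q), .inr _ => q ≠ m
  | .inl (.inr _), .inl (.inl _) => False
  | .inl (.inr r1), .inl (.inr r2) => r1 < r2
  | .inl (.inr _), .inr _ => True
  | .inr _, .inl _ => False
  | .inr i, .inr j => i < j

def modPoset (hm : ∀ x : Q.carrier, ¬ m < x) : FinPoset where
  carrier := (Q.carrier ⊕ R.carrier) ⊕ Fin k
  str :=
    { le := mle Q R k m
      lt := mlt Q R k m
      le_refl := by rintro ((q | r) | i) <;> simp [mle]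
      le_trans := by
        rintro ((q1 | r1) | i1) ((q2 | r2) | i2) ((q3 | r3) | i3) h12 h23 <;>
          simp only [mle] at h12 h23 ⊢ <;> first
            | exact le_trans h12 h23
            | trivial
            | (rintro rfl; exact hm q2 (lt_of_le_of_ne h12 (Ne.symm h23)))
      le_antisymm := by
        rintro ((q1 | r1) | i1) ((q2 | r2) | i2) h12 h21 <;>
          simp only [mle] at h12 h21 <;> first
            | (rw [le_antisymm h12 h21])
            | trivial
      lt_iff_le_not_ge := by
        rintro ((q1 | r1) | i1) ((q2 | r2) | i2) <;>
          show mlt Q R k m _ _ ↔ mle Q R k m _ _ ∧ ¬ mle Q R k m _ _ <;>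
          simp only [mle, mlt] <;> first
            | exact lt_iff_le_not_ge
            | tauto }

variable (hm : ∀ x : Q.carrier, ¬ m < x)

@[simp] lemma mod_lt_iff {x y : (modPoset Q R k m hm).carrier} :
    x < y ↔ mlt Q R k m x y := Iff.rfl

@[simp] lemma mod_eq_ll {x y : Q.carrier} :
    (Sum.inl (Sum.inl x) : (modPoset Q R k m hm).carrier) = Sum.inl (Sum.inl y) ↔ x = y :=
  ⟨fun h => Sum.inl.inj (Sum.inl.inj h), fun h => congrArg _ (congrArg _ h)⟩

@[simp] lemma mod_ne_lr_ll {r : R.carrier} {x : Q.carrier} :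
    (Sum.inl (Sum.inr r) : (modPoset Q R k m hm).carrier) ≠ Sum.inl (Sum.inl x) :=
  fun h => Sum.inr_ne_inl (Sum.inl.inj h)

@[simp] lemma mod_ne_r_ll {i : Fin k} {x : Q.carrier} :
    (Sum.inr i : (modPoset Q R k m hm).carrier) ≠ Sum.inl (Sum.inl x) :=
  fun h => Sum.inr_ne_inl h

/-! ### Step 1 : `(T + R + C_k) ↪_1 X` -/

variable {T : FinPoset} {a : Q.carrier}

def f1 (e : RelIso (fun x y : T.carrier => x < y)
      (fun x y : {z : Q.carrier // z ≠ m} => Q.DRel m a x.1 y.1)) :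
    ((T.lexSum R).lexSum (FinPoset.chain k)).carrier →
      {z : (modPoset Q R k m hm).carrier // z ≠ Sum.inl (Sum.inl m)}
  | .inl (.inl t) => ⟨Sum.inl (Sum.inl (e t).1), fun h => (e t).2 (Sum.inl.inj (Sum.inl.inj h))⟩
  | .inl (.inr r) => ⟨Sum.inl (Sum.inr r), fun h => Sum.inr_ne_inl (Sum.inl.inj h)⟩
  | .inr i => ⟨Sum.inr i, fun h => Sum.inr_ne_inl h⟩

def g1 (e : RelIso (fun x y : T.carrier => x < y)
      (fun x y : {z : Q.carrier // z ≠ m} => Q.DRel m a x.1 y.1)) :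
    {z : (modPoset Q R k m hm).carrier // z ≠ Sum.inl (Sum.inl m)} →
      ((T.lexSum R).lexSum (FinPoset.chain k)).carrier
  | ⟨.inl (.inl q), h⟩ =>
      Sum.inl (Sum.inl (e.symm ⟨q, fun hq => h (congrArg _ (congrArg _ hq))⟩))
  | ⟨.inl (.inr r), _⟩ => Sum.inl (Sum.inr r)
  | ⟨.inr i, _⟩ => Sum.inr i

lemma step1 (ham : a < m)
    (e : RelIso (fun x y : T.carrier => x < y)
      (fun x y : {z : Q.carrier // z ≠ m} => Q.DRel m a x.1 y.1)) :
    StepEmbed ((T.lexSum R).lexSum (FinPoset.chain k)) (modPoset Q R k m hm) := by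
  refine ⟨Sum.inl (Sum.inl m), Sum.inl (Sum.inl a), ?_, ham, ⟨RelIso.mk
    (Equiv.mk (f1 Q R k m hm e) (g1 Q R k m hm e) ?_ ?_) ?_⟩⟩
  · rintro ((q2 | r2) | i) h
    · exact hm q2 h
    · exact h rfl
    · exact h rfl
  · rintro ((t | r) | i)
    · simp only [f1, g1]
      exact congrArg (fun z => Sum.inl (Sum.inl z)) (e.symm_apply_apply t)
    · simp [f1, g1] <;> rfl
    · simp [f1, g1] <;> rfl
  · rintro ⟨(q | r) | i, h⟩ <;> apply Subtype.ext
    · simp only [f1, g1]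
      exact congrArg (fun z : {z : Q.carrier // z ≠ m} => Sum.inl (Sum.inl z.1))
        (e.apply_symm_apply ⟨q, fun hq => h (congrArg _ (congrArg _ hq))⟩)
    · simp [f1, g1] <;> rfl
    · simp [f1, g1] <;> rfl
  · intro x y
    rcases x with (t1 | r1) | i1 <;> rcases y with (t2 | r2) | i2
    · constructor
      · rintro ⟨h1, h2⟩
        exact Lll.2 (Lll.2 ((e.map_rel_iff (a := t1) (b := t2)).1
          ⟨h1, fun hc => h2 ⟨congrArg _ (congrArg _ hc.1), hc.2⟩⟩))
      · intro h
        obtain ⟨h1, h2⟩ := (e.map_rel_iff (a := t1) (b := t2)).2 (Lll.1 (Lll.1 h))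
        exact ⟨h1, fun hc => h2 ⟨Sum.inl.inj (Sum.inl.inj hc.1), hc.2⟩⟩
    · exact ⟨fun _ => Lll.2 Llr, fun _ => ⟨(e t1).2, fun hc => hc.2⟩⟩
    · exact ⟨fun _ => Llr, fun _ => ⟨(e t1).2, fun hc => hc.2⟩⟩
    · exact iff_of_false (fun hc => hc.1) (fun h => Lnrl (Lll.1 h))
    · exact ⟨fun hc => Lll.2 (Lrr.2 (hc.1 : r1 < r2)),
        fun h => ⟨(Lrr.1 (Lll.1 h) : r1 < r2), fun hc => Sum.inr_ne_inl (Sum.inl.inj hc.1)⟩⟩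
    · exact ⟨fun _ => Llr, fun _ => ⟨trivial, fun hc => Sum.inr_ne_inl (Sum.inl.inj hc.1)⟩⟩
    · exact iff_of_false (fun hc => hc.1) Lnrl
    · exact iff_of_false (fun hc => hc.1) Lnrl
    · exact ⟨fun hc => Lrr.2 (hc.1 : i1 < i2), fun h => ⟨(Lrr.1 h : i1 < i2),
        fun hc => Sum.inr_ne_inl hc.1⟩⟩

/-! ### Step 2 : `X ↪_1 (Q + R + C_{k+1})` -/

def f2 : (modPoset Q R k m hm).carrier →
    {z : ((Q.lexSum R).lexSum (FinPoset.chain (k + 1))).carrier // z ≠ Sum.inr (Fin.last k)}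
  | .inl (.inl q) => ⟨Sum.inl (Sum.inl q), fun h => Sum.inl_ne_inr h⟩
  | .inl (.inr r) => ⟨Sum.inl (Sum.inr r), fun h => Sum.inl_ne_inr h⟩
  | .inr i => ⟨Sum.inr i.castSucc, fun h => (Fin.castSucc_lt_last i).ne (Sum.inr.inj h)⟩

def g2 : {z : ((Q.lexSum R).lexSum (FinPoset.chain (k + 1))).carrier // z ≠ Sum.inr (Fin.last k)} →
    (modPoset Q R k m hm).carrier
  | ⟨.inl (.inl q), _⟩ => Sum.inl (Sum.inl q)
  | ⟨.inl (.inr r), _⟩ => Sum.inl (Sum.inr r)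
  | ⟨.inr j, h⟩ => Sum.inr (j.castPred (fun hj => h (congrArg _ hj)))

lemma step2 : StepEmbed (modPoset Q R k m hm) ((Q.lexSum R).lexSum (FinPoset.chain (k + 1))) := by
  refine ⟨Sum.inr (Fin.last k), Sum.inl (Sum.inl m), ?_, Llr, ⟨RelIso.mk
    (Equiv.mk (f2 Q R k m hm) (g2 Q R k m hm) ?_ ?_) ?_⟩⟩
  · rintro ((q | r) | j) h
    · exact Lnrl h
    · exact Lnrl h
    · exact (show j ≤ Fin.last k from Fin.le_last j).not_gt (Lrr.1 h)
  · rintro ((q | r) | i) <;> simp [f2, g2] <;> rfl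
  · rintro ⟨(q | r) | j, h⟩ <;> apply Subtype.ext <;> simp [f2, g2] <;> rfl
  · intro x y
    rcases x with (q1 | r1) | i1 <;> rcases y with (q2 | r2) | i2
    · constructor
      · rintro ⟨h1, -⟩
        exact Lll.1 (Lll.1 h1)
      · intro h
        exact ⟨Lll.2 (Lll.2 h), fun hc => hm q2 ((Sum.inl.inj (Sum.inl.inj hc.1)) ▸ h)⟩
    · constructor
      · rintro ⟨-, h2⟩
        exact fun hq => h2 ⟨congrArg _ (congrArg _ hq), Llr⟩
      · intro hq
        exact ⟨Lll.2 Llr, fun hc => hq (Sum.inl.inj (Sum.inl.inj hc.1))⟩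
    · constructor
      · rintro ⟨-, h2⟩
        exact fun hq => h2 ⟨congrArg _ (congrArg _ hq), Lrr.2 (Fin.castSucc_lt_last i2)⟩
      · intro hq
        exact ⟨Llr, fun hc => hq (Sum.inl.inj (Sum.inl.inj hc.1))⟩
    · exact iff_of_false (fun hc => Lnrl (Lll.1 hc.1)) (fun h => h)
    · exact ⟨fun hc => Lrr.1 (Lll.1 hc.1),
        fun h => ⟨Lll.2 (Lrr.2 h), fun hc => Sum.inr_ne_inl (Sum.inl.inj hc.1)⟩⟩
    · exact ⟨fun _ => trivial, fun _ => ⟨Llr, fun hc => Sum.inr_ne_inl (Sum.inl.inj hc.1)⟩⟩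
    · exact iff_of_false (fun hc => Lnrl hc.1) (fun h => h)
    · exact iff_of_false (fun hc => Lnrl hc.1) (fun h => h)
    · exact ⟨fun hc => Fin.castSucc_lt_castSucc_iff.1 (Lrr.1 hc.1),
        fun h => ⟨Lrr.2 (Fin.castSucc_lt_castSucc_iff.2 h), fun hc => Sum.inr_ne_inl hc.1⟩⟩

/-! ### Base case -/

def baseIso (P : FinPoset) (e : P.carrier ≃o Q.carrier) :
    (P.lexSum R).carrier ≃o ((Q.lexSum R).lexSum (FinPoset.chain 0)).carrier := by
  refine RelIso.mk (Equiv.mk ?_ ?_ ?_ ?_) ?_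
  · exact fun x => match x with
      | .inl p => Sum.inl (Sum.inl (e p))
      | .inr r => Sum.inl (Sum.inr r)
  · exact fun y => match y with
      | .inl (.inl q) => Sum.inl (e.symm q)
      | .inl (.inr r) => Sum.inr r
      | .inr i => i.elim0
  · rintro (p | r) <;> simp <;> rfl
  · rintro ((q | r) | i)
    · simp <;> rfl
    · simp <;> rfl
    · exact i.elim0
  · intro x y
    rcases x with p1 | r1 <;> rcases y with p2 | r2
    · exact ⟨fun h => LEll.2 (e.le_iff_le.1 (LEll.1 (LEll.1 h))),
        fun h => LEll.2 (LEll.2 (e.le_iff_le.2 (LEll.1 h)))⟩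
    · exact ⟨fun _ => LElr, fun _ => LEll.2 LElr⟩
    · exact iff_of_false (fun h => LEnrl (LEll.1 h)) LEnrl
    · exact ⟨fun h => LErr.2 (LErr.1 (LEll.1 h)), fun h => LEll.2 (LErr.2 (LErr.1 h))⟩

end Lemma54

/-- **Lemma 5.4**: if `P ↪_k Q` then `P + R ↪_{2k} Q + R + C_k`. -/
theorem strongEmbed_lexSum (P Q R : FinPoset) (k : ℕ) (h : StrongEmbedN k P Q) :
    StrongEmbedN (2 * k) (P.lexSum R) ((Q.lexSum R).lexSum (FinPoset.chain k)) := by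
  induction k generalizing Q with
  | zero =>
    obtain ⟨e⟩ := h
    exact ⟨Lemma54.baseIso Q R P e⟩
  | succ k ih =>
    obtain ⟨T, hT, mm, aa, hmax, ham, ⟨e⟩⟩ := h
    show StrongEmbedN (2 * k + 1 + 1) (P.lexSum R) ((Q.lexSum R).lexSum (FinPoset.chain (k + 1)))
    exact ⟨Lemma54.modPoset Q R k mm hmax,
      ⟨(T.lexSum R).lexSum (FinPoset.chain k), ih T hT, Lemma54.step1 Q R k mm hmax ham e⟩,
      Lemma54.step2 Q R k mm hmax⟩
end

section
/- Let P be a finite poset and m a maximal element of P, and set k = |P| − |lb_P(m)| − 1, where lb_P(m) = {x : x ≺ m}. Then P strongly embeds into (P − m) + C_{k+1} in k steps: P ↪_k ((P − m) + C_{k+1}). -/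
section G

def gle {β : Type} [PartialOrder β] (T : Finset β) {n : ℕ} : β ⊕ Fin n → β ⊕ Fin n → Prop
  | .inl x, .inl y => x ≤ y
  | .inl x, .inr _ => x ∉ T
  | .inr _, .inl _ => False
  | .inr j, .inr j' => j ≤ j'


section gleLemmas
variable {β : Type} [PartialOrder β] {T : Finset β} {n : ℕ}

lemma glt_inl_inl {x y : β} :
    gle (n := n) T (Sum.inl x) (Sum.inl y) ∧ ¬ gle (n := n) T (Sum.inl y) (Sum.inl x) ↔ x < y := by
  simp only [gle]; exact (lt_iff_le_not_ge (α := β)).symm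

lemma glt_inl_inr {x : β} {j : Fin n} :
    gle T (Sum.inl x) (Sum.inr j) ∧ ¬ gle T (Sum.inr j) (Sum.inl x) ↔ x ∉ T := by
  simp only [gle]; exact ⟨fun h => h.1, fun h => ⟨h, fun h' => h'⟩⟩

lemma glt_inr_inl {x : β} {j : Fin n} :
    ¬ (gle T (Sum.inr j) (Sum.inl x) ∧ ¬ gle T (Sum.inl x) (Sum.inr j)) := fun h => h.1

lemma glt_inr_inr {j j' : Fin n} :
    gle T (Sum.inr j) (Sum.inr j') ∧ ¬ gle T (Sum.inr j') (Sum.inr j) ↔ j < j' := by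
  simp only [gle]; exact (lt_iff_le_not_ge (α := Fin n)).symm

end gleLemmas

variable (β : Type) [Fintype β] [PartialOrder β]

/-- auxiliary order: floating set `T` with a chain of length `n` above everything else -/
def GOrd (T : Finset β) (hT : ∀ x ∈ T, ∀ y : β, x < y → y ∈ T) (n : ℕ) :
    PartialOrder (β ⊕ Fin n) where
  le := gle T
  lt a b := gle T a b ∧ ¬ gle T b a
  lt_iff_le_not_ge _ _ := Iff.rfl
  le_refl a := by cases a with
    | inl x => exact le_refl x
    | inr j => exact le_refl j
  le_trans a b c hab hbc := by
    cases a with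
    | inl x => cases b with
      | inl y => cases c with
        | inl z => exact le_trans (α := β) hab hbc
        | inr j =>
          intro hx
          rcases eq_or_lt_of_le (α := β) hab with h | h
          · exact hbc (h ▸ hx)
          · exact hbc (hT x hx y h)
      | inr j => cases c with
        | inl z => exact hbc.elim
        | inr j' => exact hab
    | inr j => cases b with
      | inl y => exact hab.elim
      | inr j' => cases c with
        | inl z => exact hbc.elim
        | inr j'' => exact le_trans (α := Fin n) hab hbc
  le_antisymm a b hab hba := by
    cases a with
    | inl x => cases b with
      | inl y => exact congrArg _ (le_antisymm (α := β) hab hba)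
      | inr j => exact hba.elim
    | inr j => cases b with
      | inl y => exact hab.elim
      | inr j' => exact congrArg _ (le_antisymm (α := Fin n) hab hba)

/-- the FinPoset version -/
def G (T : Finset β) (hT : ∀ x ∈ T, ∀ y : β, x < y → y ∈ T) (n : ℕ) : FinPoset where
  carrier := β ⊕ Fin n
  str := GOrd β T hT n

variable {β} {T : Finset β} {hT : ∀ x ∈ T, ∀ y : β, x < y → y ∈ T} {n : ℕ}

lemma G_le_iff {a b : (G β T hT n).carrier} : a ≤ b ↔ gle T a b := Iff.rfl

lemma G_lt_iff {a b : (G β T hT n).carrier} : a < b ↔ gle T a b ∧ ¬ gle T b a := Iff.rfl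

end G

section Step
variable {β : Type} [Fintype β] [PartialOrder β] [DecidableEq β]

/-- the underlying equivalence for one step -/
def stepEquiv (β : Type) (n : ℕ) :
    (β ⊕ Fin n) ≃ {z : β ⊕ Fin (n+1) // z ≠ Sum.inr (Fin.last n)} where
  toFun a :=
    match a with
    | .inl x => ⟨Sum.inl x, by simp⟩
    | .inr j => ⟨Sum.inr j.castSucc, by simp [(Fin.castSucc_lt_last j).ne]⟩
  invFun z :=
    match z with
    | ⟨.inl x, _⟩ => Sum.inl x
    | ⟨.inr j, h⟩ => Sum.inr (j.castPred (by simpa using h))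
  left_inv a := by
    cases a with
    | inl x => rfl
    | inr j => simp
  right_inv z := by
    obtain ⟨z, hz⟩ := z
    cases z with
    | inl x => rfl
    | inr j => simp [Fin.castSucc_castPred]

@[simp] lemma stepEquiv_inl {β : Type} {n : ℕ} (x : β) :
    (stepEquiv β n (Sum.inl x)).1 = Sum.inl x := rfl

@[simp] lemma stepEquiv_inr {β : Type} {n : ℕ} (j : Fin n) :
    (stepEquiv β n (Sum.inr j)).1 = Sum.inr j.castSucc := rfl

omit [Fintype β] in
lemma erase_upclosed {T : Finset β} (hT : ∀ x ∈ T, ∀ y : β, x < y → y ∈ T)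
    {v : β} (hmin : ∀ y ∈ T, ¬ y < v) :
    ∀ x ∈ T.erase v, ∀ y : β, x < y → y ∈ T.erase v := by
  intro x hx y hxy
  rw [Finset.mem_erase] at hx ⊢
  refine ⟨?_, hT x hx.2 y hxy⟩
  rintro rfl
  exact hmin x hx.2 hxy

theorem stepG (T : Finset β) (hT : ∀ x ∈ T, ∀ y : β, x < y → y ∈ T)
    (v : β) (hv : v ∈ T) (hmin : ∀ y ∈ T, ¬ y < v)
    (hT' : ∀ x ∈ T.erase v, ∀ y : β, x < y → y ∈ T.erase v) (n : ℕ) :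
    StepEmbed (G β T hT n) (G β (T.erase v) hT' (n+1)) := by
  refine ⟨Sum.inr (Fin.last n), Sum.inl v, ?_, ?_, ⟨RelIso.mk (stepEquiv β n) ?_⟩⟩
  · intro x hx
    replace hx := G_lt_iff.mp hx
    cases x with
    | inl y => exact glt_inr_inl hx
    | inr j => exact absurd (glt_inr_inr.mp hx) (not_lt.mpr (Fin.le_last j))
  · refine G_lt_iff.mpr ?_
    exact glt_inl_inr.mpr (Finset.notMem_erase v T)
  · intro p q
    cases p with
    | inl x =>
      cases q with
      | inl y =>
        show (gle (n := n+1) (T.erase v) (Sum.inl x) (Sum.inl y) ∧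
              ¬ gle (n := n+1) (T.erase v) (Sum.inl y) (Sum.inl x)) ∧
            ¬ ((Sum.inl x : β ⊕ Fin (n+1)) = Sum.inl v ∧
              (gle (n := n+1) (T.erase v) (Sum.inl y) (Sum.inr (Fin.last n)) ∧
               ¬ gle (n := n+1) (T.erase v) (Sum.inr (Fin.last n)) (Sum.inl y))) ↔
            (gle (n := n) T (Sum.inl x) (Sum.inl y) ∧ ¬ gle (n := n) T (Sum.inl y) (Sum.inl x))
        rw [glt_inl_inl, glt_inl_inl]
        constructor
        · exact fun h => h.1
        · intro h
          refine ⟨h, ?_⟩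
          rintro ⟨hxv, hy, -⟩
          rw [Sum.inl.injEq] at hxv
          subst hxv
          simp only [gle, Finset.mem_erase, not_and, not_not] at hy
          exact absurd (hT x hv y h) (by simpa [h.ne'] using hy)
      | inr j =>
        show (gle (n := n+1) (T.erase v) (Sum.inl x) (Sum.inr j.castSucc) ∧
              ¬ gle (n := n+1) (T.erase v) (Sum.inr j.castSucc) (Sum.inl x)) ∧
            ¬ ((Sum.inl x : β ⊕ Fin (n+1)) = Sum.inl v ∧
              (gle (n := n+1) (T.erase v) (Sum.inr j.castSucc) (Sum.inr (Fin.last n)) ∧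
               ¬ gle (n := n+1) (T.erase v) (Sum.inr (Fin.last n)) (Sum.inr j.castSucc))) ↔
            (gle (n := n) T (Sum.inl x) (Sum.inr j) ∧ ¬ gle (n := n) T (Sum.inr j) (Sum.inl x))
        rw [glt_inl_inr, glt_inl_inr, glt_inr_inr, Sum.inl.injEq]
        constructor
        · rintro ⟨hxe, hnot⟩ hxT
          have hxv : x ≠ v := fun hh => hnot ⟨hh, Fin.castSucc_lt_last j⟩
          exact hxe (Finset.mem_erase.mpr ⟨hxv, hxT⟩)
        · intro hxT
          refine ⟨fun hc => hxT (Finset.mem_erase.mp hc).2, ?_⟩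
          rintro ⟨rfl, -⟩
          exact hxT hv
    | inr j =>
      cases q with
      | inl y =>
        constructor
        · rintro ⟨⟨h, -⟩, -⟩
          exact False.elim h
        · rintro ⟨h, -⟩
          exact False.elim h
      | inr j' =>
        show (gle (n := n+1) (T.erase v) (Sum.inr j.castSucc) (Sum.inr j'.castSucc) ∧
              ¬ gle (n := n+1) (T.erase v) (Sum.inr j'.castSucc) (Sum.inr j.castSucc)) ∧
            ¬ ((Sum.inr j.castSucc : β ⊕ Fin (n+1)) = Sum.inl v ∧
              (gle (n := n+1) (T.erase v) (Sum.inr j'.castSucc) (Sum.inr (Fin.last n)) ∧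
               ¬ gle (n := n+1) (T.erase v) (Sum.inr (Fin.last n)) (Sum.inr j'.castSucc))) ↔
            (gle (n := n) T (Sum.inr j) (Sum.inr j') ∧ ¬ gle (n := n) T (Sum.inr j') (Sum.inr j))
        rw [glt_inr_inr, glt_inr_inr, glt_inr_inr, Fin.castSucc_lt_castSucc_iff]
        constructor
        · exact fun h => h.1
        · intro h
          exact ⟨h, fun hc => by cases hc.1⟩

end Step

section Transport

theorem stepEmbed_congr_right {R Q Q' : FinPoset} (e : Q.carrier ≃o Q'.carrier) :
    StepEmbed R Q → StepEmbed R Q' := by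
  rintro ⟨m, a, hmax, ham, ⟨f⟩⟩
  refine ⟨e m, e a, ?_, e.lt_iff_lt.mpr ham,
    ⟨f.trans (RelIso.mk (e.toEquiv.subtypeEquiv
      (fun z => not_congr (Equiv.apply_eq_iff_eq e.toEquiv).symm)) ?_)⟩⟩
  · intro x hx
    have h2 : e.symm (e m) < e.symm x := e.symm.lt_iff_lt.mpr hx
    rw [e.symm_apply_apply] at h2
    exact hmax _ h2
  · intro x y
    simp only [FinPoset.DRel, Equiv.subtypeEquiv_apply]
    rw [show ∀ z : Q.carrier, e.toEquiv z = e z from fun _ => rfl,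
      show ∀ z : Q.carrier, e.toEquiv z = e z from fun _ => rfl]
    rw [e.lt_iff_lt, e.lt_iff_lt]
    rw [show (e x.1 = e a) = (x.1 = a) from propext (Equiv.apply_eq_iff_eq e.toEquiv)]

theorem strongEmbedN_congr_right {n : ℕ} {P Q Q' : FinPoset}
    (h : StrongEmbedN n P Q) (e : Q.carrier ≃o Q'.carrier) : StrongEmbedN n P Q' := by
  cases n with
  | zero => obtain ⟨f⟩ := h; exact ⟨f.trans e⟩
  | succ n => obtain ⟨R, h1, h2⟩ := h; exact ⟨R, h1, stepEmbed_congr_right e h2⟩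

theorem strongEmbedN_congr_left {n : ℕ} {P P' Q : FinPoset}
    (e : P'.carrier ≃o P.carrier) (h : StrongEmbedN n P Q) : StrongEmbedN n P' Q := by
  induction n generalizing Q with
  | zero => obtain ⟨f⟩ := h; exact ⟨e.trans f⟩
  | succ n ih => obtain ⟨R, h1, h2⟩ := h; exact ⟨R, ih h1, h2⟩

theorem strongEmbedN_cons {P R Q : FinPoset} {n : ℕ}
    (h1 : StepEmbed P R) (h2 : StrongEmbedN n R Q) : StrongEmbedN (n+1) P Q := by
  induction n generalizing Q with
  | zero => obtain ⟨f⟩ := h2; exact ⟨P, ⟨OrderIso.refl _⟩, stepEmbed_congr_right f h1⟩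
  | succ n ih => obtain ⟨R', hR', hstep⟩ := h2; exact ⟨R', ih hR', hstep⟩

end Transport

theorem embedN (β : Type) [Fintype β] [PartialOrder β] [DecidableEq β] :
    ∀ (k : ℕ) (T : Finset β) (hT : ∀ x ∈ T, ∀ y : β, x < y → y ∈ T), T.card = k →
      ∀ n : ℕ, StrongEmbedN k (G β T hT n)
        (G β (∅ : Finset β) (fun x hx _ _ => absurd hx (Finset.notMem_empty x)) (n + k)) := by
  intro k
  induction k with
  | zero =>
    intro T hT hc n
    obtain rfl : T = ∅ := Finset.card_eq_zero.mp hc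
    exact ⟨OrderIso.refl _⟩
  | succ k ih =>
    intro T hT hc n
    have hne : T.Nonempty := Finset.card_pos.mp (by omega)
    obtain ⟨v, hv, hmin⟩ : ∃ v ∈ T, ∀ y ∈ T, ¬ y < v := by
      obtain ⟨v, hv⟩ := Finset.exists_minimal hne
      exact ⟨v, hv.1, fun y hy hlt => lt_irrefl v (lt_of_le_of_lt (hv.2 hy hlt.le) hlt)⟩
    have hT' := erase_upclosed hT hmin
    have hstep := stepG T hT v hv hmin hT' n
    have hrec := ih (T.erase v) hT' (by rw [Finset.card_erase_of_mem hv, hc]; omega) (n+1)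
    have h := strongEmbedN_cons hstep hrec
    have hn : n + 1 + k = n + (k + 1) := by omega
    rw [hn] at h
    exact h

/-- **Lemma 5.5**: if `m` is a maximal element of `P` and
`k = |P| − |lb_P(m)| − 1`, then `P ↪_k (P − m) + C_{k+1}`. -/
theorem strongEmbed_erase_max (P : FinPoset) (m : P.carrier) (hm : ∀ x, ¬ m < x) :
    StrongEmbedN (Fintype.card P.carrier - Nat.card {x : P.carrier // x < m} - 1) P
      ((P.erase m).lexSum (FinPoset.chain
        (Fintype.card P.carrier - Nat.card {x : P.carrier // x < m} - 1 + 1))) := by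
  classical
  let T : Finset (P.erase m).carrier := Finset.univ.filter (fun x => ¬ x.1 < m)
  have memT : ∀ x : (P.erase m).carrier, x ∈ T ↔ ¬ x.1 < m := by
    intro x; simp [T]
  have hT : ∀ x ∈ T, ∀ y : (P.erase m).carrier, x < y → y ∈ T := by
    intro x hx y hxy
    rw [memT] at hx ⊢
    intro hym
    exact hx (lt_trans (show x.1 < y.1 from hxy) hym)
  -- counting
  have hcard : Fintype.card P.carrier - Nat.card {x : P.carrier // x < m} - 1 = T.card := by
    set A : Finset P.carrier := Finset.univ.filter (fun x => ¬ x < m) with hA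
    have h1 : Nat.card {x : P.carrier // x < m}
        = (Finset.univ.filter (fun x : P.carrier => x < m)).card := by
      rw [Nat.card_eq_fintype_card, Fintype.card_subtype]
    have h2 : (Finset.univ.filter (fun x : P.carrier => x < m)).card + A.card
        = Fintype.card P.carrier := by
      rw [hA, Finset.card_filter_add_card_filter_not, Finset.card_univ]
    have hmA : m ∈ A := Finset.mem_filter.mpr ⟨Finset.mem_univ m, lt_irrefl m⟩
    have h3 : (A.erase m).card + 1 = A.card := Finset.card_erase_add_one hmA
    have h4 : T.card = (A.erase m).card := by
      apply Finset.card_bij (fun x _ => x.1)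
      · intro a ha
        rw [Finset.mem_erase]
        exact ⟨a.2, Finset.mem_filter.mpr ⟨Finset.mem_univ _, (memT a).mp ha⟩⟩
      · intro a _ b _ h
        exact Subtype.ext h
      · intro b hb
        rw [Finset.mem_erase] at hb
        have hb2 := Finset.mem_filter.mp hb.2
        exact ⟨⟨b, hb.1⟩, (memT _).mpr hb2.2, rfl⟩
    omega
  rw [hcard]
  have base := embedN (P.erase m).carrier T.card T hT rfl 1
  refine strongEmbedN_congr_right (strongEmbedN_congr_left ?_ base) ?_
  · -- P ≃o G β T 1
    refine RelIso.mk (Equiv.mk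
      (fun x => if h : x = m then Sum.inr 0 else Sum.inl ⟨x, h⟩)
      (fun a => match a with | .inl b => b.1 | .inr _ => m) ?_ ?_) ?_
    · intro x
      by_cases h : x = m
      · simp [h]
      · simp [h]
    · intro a
      cases a with
      | inl b =>
        exact dif_neg b.2
      | inr j =>
        exact (dif_pos rfl).trans (congrArg Sum.inr (Subsingleton.elim _ _))
    · intro x y
      simp only [Equiv.coe_fn_mk]
      show gle (n := 1) T (if h : x = m then Sum.inr 0 else Sum.inl ⟨x, h⟩)
          (if h : y = m then Sum.inr 0 else Sum.inl ⟨y, h⟩) ↔ x ≤ y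
      by_cases hx : x = m <;> by_cases hy : y = m
      · rw [dif_pos hx, dif_pos hy, hx, hy]
        exact iff_of_true (le_refl _) (le_refl m)
      · rw [dif_pos hx, dif_neg hy, hx]
        refine iff_of_false (fun h => h) (fun h => ?_)
        exact hm y (lt_of_le_of_ne h (Ne.symm hy))
      · rw [dif_neg hx, dif_pos hy, hy]
        constructor
        · intro h
          have h' : (⟨x, hx⟩ : (P.erase m).carrier) ∉ T := h
          replace h' := (not_congr (memT _)).mp h'
          exact le_of_lt (not_not.mp h')
        · intro h
          show (⟨x, hx⟩ : (P.erase m).carrier) ∉ T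
          refine (not_congr (memT _)).mpr ?_
          exact not_not.mpr (lt_of_le_of_ne h hx)
      · rw [dif_neg hx, dif_neg hy]
        exact Iff.rfl
  · -- G β ∅ (1 + T.card) ≃o lexSum
    have hn : 1 + T.card = T.card + 1 := by omega
    refine RelIso.mk (Equiv.mk
      (fun a => match a with
        | .inl x => toLex (Sum.inl x)
        | .inr j => toLex (Sum.inr (Fin.cast hn j)))
      (fun b => match (ofLex b) with
        | .inl x => Sum.inl x
        | .inr j => Sum.inr (Fin.cast hn.symm j)) ?_ ?_) ?_
    · intro a
      cases a with
      | inl x => rfl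
      | inr j => rfl
    · intro b
      cases b with
      | inl x => rfl
      | inr j => rfl
    · intro a b
      cases a with
      | inl x =>
        cases b with
        | inl y =>
          show Sum.Lex (fun a b : (P.erase m).carrier => a ≤ b)
              (fun a b : Fin (T.card+1) => a ≤ b) (Sum.inl x) (Sum.inl y) ↔ x ≤ y
          exact ⟨fun h => Sum.lex_inl_inl.mp h, fun h => Sum.Lex.inl h⟩
        | inr j =>
          show Sum.Lex (fun a b : (P.erase m).carrier => a ≤ b)
              (fun a b : Fin (T.card+1) => a ≤ b) (Sum.inl x) (Sum.inr (Fin.cast hn j)) ↔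
              x ∉ (∅ : Finset (P.erase m).carrier)
          exact iff_of_true (Sum.Lex.sep _ _) (Finset.notMem_empty x)
      | inr j =>
        cases b with
        | inl y =>
          show Sum.Lex (fun a b : (P.erase m).carrier => a ≤ b)
              (fun a b : Fin (T.card+1) => a ≤ b) (Sum.inr (Fin.cast hn j)) (Sum.inl y) ↔ False
          exact iff_of_false Sum.lex_inr_inl (fun h => h)
        | inr j' =>
          show Sum.Lex (fun a b : (P.erase m).carrier => a ≤ b)
              (fun a b : Fin (T.card+1) => a ≤ b)
              (Sum.inr (Fin.cast hn j)) (Sum.inr (Fin.cast hn j')) ↔ j ≤ j'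
          constructor
          · intro h
            have h' : Fin.cast hn j ≤ Fin.cast hn j' := Sum.lex_inr_inr.mp h
            exact h'
          · intro h
            exact Sum.Lex.inr (show Fin.cast hn j ≤ Fin.cast hn j' from h)
end

section
/- For all nonnegative integers a and b, the disjoint union of chains C_a ⊔ C_b strongly embeds into the chain C_{2a+b}. -/
namespace Lem59

def yle (p q i j : ℕ) : Prop := i = j ∨ (i < j ∧ (i < p ∨ (i < p + q ↔ j < p + q)))
def ylt (p q i j : ℕ) : Prop := i < j ∧ (i < p ∨ (i < p + q ↔ j < p + q))

/-- The Y-shaped poset: a spine chain of `p` elements, below two incomparable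
chains of `q` and `r` elements respectively. -/
def Yp (p q r : ℕ) : FinPoset where
  carrier := Fin (p + q + r)
  str :=
  { le := fun i j => yle p q i.val j.val
    lt := fun i j => ylt p q i.val j.val
    le_refl := fun i => Or.inl rfl
    le_trans := fun a b c hab hbc => by simp only [yle] at hab hbc ⊢; omega
    lt_iff_le_not_ge := fun a b => by simp only [yle, ylt]; omega
    le_antisymm := fun a b h1 h2 => by simp only [yle] at h1 h2; exact Fin.ext (by omega) }

theorem Yp_lt_iff {p q r : ℕ} (x y : (Yp p q r).carrier) :
    x < y ↔ x.val < y.val ∧ (x.val < p ∨ (x.val < p + q ↔ y.val < p + q)) := Iff.rfl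

theorem Yp_le_iff {p q r : ℕ} (x y : (Yp p q r).carrier) :
    x ≤ y ↔ x.val = y.val ∨
      (x.val < y.val ∧ (x.val < p ∨ (x.val < p + q ↔ y.val < p + q))) := Iff.rfl

theorem Yp_eq_iff {p q r : ℕ} (x y : (Yp p q r).carrier) :
    x = y ↔ x.val = y.val := Fin.ext_iff

theorem chain_lt_iff {n : ℕ} (x y : (FinPoset.chain n).carrier) :
    x < y ↔ x.val < y.val := Iff.rfl

theorem chain_le_iff {n : ℕ} (x y : (FinPoset.chain n).carrier) :
    x ≤ y ↔ x.val ≤ y.val := Iff.rfl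

theorem chain_eq_iff {n : ℕ} (x y : (FinPoset.chain n).carrier) :
    x = y ↔ x.val = y.val := Fin.ext_iff

/-- One step: `Y(p, q+1, r) ↪₁ Y(p+1, q, r+1)`. -/
theorem stepA (p q r : ℕ) : StepEmbed (Yp p (q+1) r) (Yp (p+1) q (r+1)) := by
  refine ⟨⟨p+1+q+r, by omega⟩, ⟨p, by omega⟩, ?_, ?_, ?_⟩
  · intro x
    erw [Yp_lt_iff]
    have := x.isLt
    simp only [Fin.val_mk] at *
    omega
  · erw [Yp_lt_iff]
    simp only [Fin.val_mk]
    omega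
  · refine ⟨⟨⟨fun i => ⟨⟨i.val, by have := i.isLt; omega⟩, fun h => by
        have := (Yp_eq_iff _ _).mp h
        simp only [Fin.val_mk] at this
        have := i.isLt; omega⟩,
      fun z => ⟨z.1.val, by
        have h1 := z.1.isLt
        have h2 : z.1.val ≠ p+1+q+r := by
          intro h
          exact z.2 ((Yp_eq_iff _ _).mpr (by simpa using h))
        omega⟩,
      fun i => Fin.ext rfl,
      fun z => Subtype.ext (Fin.ext rfl)⟩, ?_⟩⟩
    intro i j
    obtain ⟨i, hi⟩ := i
    obtain ⟨j, hj⟩ := j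
    erw [Equiv.coe_fn_mk]
    simp only [Equiv.coe_fn_mk, FinPoset.DRel, Yp_lt_iff, Yp_eq_iff, Fin.val_mk]
    erw [Yp_eq_iff, Yp_lt_iff, Yp_lt_iff, Yp_lt_iff]
    simp only [Fin.val_mk, Subtype.coe_mk]
    omega

/-- Last step: `Y(p, 1, s) ↪₁ C_{p+1+s+1}`. -/
theorem stepB (p s : ℕ) : StepEmbed (Yp p 1 s) (FinPoset.chain (p+1+s+1)) := by
  refine ⟨⟨p+1+s, by omega⟩, ⟨p, by omega⟩, ?_, ?_, ?_⟩
  · intro x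
    erw [chain_lt_iff]
    have := x.isLt
    simp only [Fin.val_mk] at *
    omega
  · erw [chain_lt_iff]
    simp only [Fin.val_mk]
    omega
  · refine ⟨⟨⟨fun i => ⟨⟨i.val, by have := i.isLt; omega⟩, fun h => by
        have := (chain_eq_iff _ _).mp h
        simp only [Fin.val_mk] at this
        have := i.isLt; omega⟩,
      fun z => ⟨z.1.val, by
        have h1 := z.1.isLt
        have h2 : z.1.val ≠ p+1+s := by
          intro h
          exact z.2 ((chain_eq_iff _ _).mpr (by simpa using h))
        omega⟩,
      fun i => Fin.ext rfl,
      fun z => Subtype.ext (Fin.ext rfl)⟩, ?_⟩⟩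
    intro i j
    obtain ⟨i, hi⟩ := i
    obtain ⟨j, hj⟩ := j
    erw [Equiv.coe_fn_mk]
    simp only [Equiv.coe_fn_mk, FinPoset.DRel, chain_lt_iff, chain_eq_iff, Yp_lt_iff, Fin.val_mk]
    erw [chain_eq_iff, chain_lt_iff, chain_lt_iff, Yp_lt_iff, chain_lt_iff]
    simp only [Fin.val_mk, Subtype.coe_mk]
    change i < j ∧ ¬(i = p ∧ j < p + 1 + s) ↔ i < j ∧ (i < p ∨ (i < p + 1 ↔ j < p + 1))
    omega

/-- Transport a strong embedding along an order isomorphism at the source. -/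
theorem transport : ∀ (n : ℕ) (P P' Q : FinPoset),
    (P.carrier ≃o P'.carrier) → StrongEmbedN n P' Q → StrongEmbedN n P Q
  | 0, _, _, _, e, ⟨f⟩ => ⟨e.trans f⟩
  | n+1, P, P', _, e, ⟨R, h1, h2⟩ => ⟨R, transport n P P' R e h1, h2⟩

/-- Iterating `stepA`: `Y(0, q+k, r) ↪_k Y(k, q, r+k)`. -/
theorem chainY (q r : ℕ) : ∀ k, StrongEmbedN k (Yp 0 (q+k) r) (Yp k q (r+k))
  | 0 => ⟨OrderIso.refl _⟩
  | k+1 => by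
    refine ⟨Yp k (q+1) (r+k), ?_, stepA k q (r+k)⟩
    rw [show q+(k+1) = (q+1)+k from by omega]
    exact chainY (q+1) r k

/-- Base iso: `C_a ⊔ C_b ≃o Y(0, a, b)`. -/
noncomputable def baseIso (a b : ℕ) :
    ((FinPoset.chain a).disjUnion (FinPoset.chain b)).carrier ≃o (Yp 0 a b).carrier := by
  refine ⟨⟨Sum.elim (fun i => ⟨i.val, by have := i.isLt; omega⟩)
      (fun j => ⟨a + j.val, by have := j.isLt; omega⟩),
    fun z => if h : z.val < a then Sum.inl ⟨z.val, h⟩ else Sum.inr ⟨z.val - a, by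
      have := z.isLt; omega⟩, ?_, ?_⟩, ?_⟩
  · rintro (i | j)
    · simp only [Sum.elim_inl, Fin.val_mk]
      erw [dif_pos i.isLt]
      exact congrArg Sum.inl (Fin.ext rfl)
    · simp only [Sum.elim_inr, Fin.val_mk]
      erw [dif_neg (show ¬ (a + j.val < a) by omega)]
      congr 1
      exact Fin.ext (by show a + j.val - a = j.val; omega)
  · intro z
    dsimp only
    by_cases h : z.val < a
    · erw [dif_pos h]
      exact (Yp_eq_iff _ _).mpr rfl
    · erw [dif_neg h]
      erw [Sum.elim_inr]
      exact (Yp_eq_iff _ _).mpr (by simp only [Fin.val_mk]; omega)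
  · rintro (i | j) (i' | j') <;>
      (erw [Equiv.coe_fn_mk]; dsimp only [Sum.elim])
    · erw [Sum.inl_le_inl_iff, chain_le_iff, Yp_le_iff]
      simp only [Fin.val_mk]
      have := i.isLt; have := i'.isLt
      omega
    · exact iff_of_false (by erw [Yp_le_iff]; simp only [Fin.val_mk]; have := i.isLt; omega) Sum.not_inl_le_inr
    · exact iff_of_false (by erw [Yp_le_iff]; simp only [Fin.val_mk]; have := i'.isLt; omega) Sum.not_inr_le_inl
    · erw [Sum.inr_le_inr_iff, chain_le_iff, Yp_le_iff]
      simp only [Fin.val_mk]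
      have := j.isLt; have := j'.isLt
      omega

/-- The `a = 0` iso: `C_0 ⊔ C_b ≃o C_b`. -/
noncomputable def zeroIso (b : ℕ) :
    ((FinPoset.chain 0).disjUnion (FinPoset.chain b)).carrier ≃o
      (FinPoset.chain b).carrier := by
  refine ⟨⟨Sum.elim (fun i => i.elim0) id, Sum.inr, ?_, fun z => rfl⟩, ?_⟩
  · rintro (i | j)
    · exact i.elim0
    · rfl
  · rintro (i | j) (i' | j')
    · exact i.elim0
    · exact i.elim0
    · exact i'.elim0
    · exact (Sum.inr_le_inr_iff).symm

end Lem59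

/-- **Lemma 5.9**: `C_a ⨿ C_b ↪ C_{2a+b}` for all nonnegative integers `a` and `b`. -/
theorem chain_disjUnion_chain_strongEmbed (a b : ℕ) :
    StrongEmbed ((FinPoset.chain a).disjUnion (FinPoset.chain b))
      (FinPoset.chain (2 * a + b)) := by
  cases a with
  | zero =>
    rw [show 2*0+b = b from by omega]
    exact ⟨0, ⟨Lem59.zeroIso b⟩⟩
  | succ a' =>
    rw [show 2*(a'+1)+b = a'+1+(b+a')+1 from by omega]
    refine ⟨a'+1, Lem59.Yp a' 1 (b+a'), ?_, Lem59.stepB a' (b+a')⟩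
    refine Lem59.transport a' _ (Lem59.Yp 0 (1+a') b) _ ?_ ?_
    · rw [show (1:ℕ)+a' = a'+1 from by omega]
      exact Lem59.baseIso (a'+1) b
    · exact Lem59.chainY 1 b a'
end
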